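/- arXiv:0811.3331 — 7 statements merged into one kernel-verified Lean document; each statement's English description precedes it below -/
import Mathlib

section
/- Let ν > 0, λ ≥ 0 and 0 ≤ r < 8/9, and let φ(t) = ν(1−r)t + ν r t/(1+λ²t²). Then φ is strictly increasing on ℝ, φ(t) → +∞ as t → +∞, φ(t) → −∞ as t → −∞, and φ is a bijection from ℝ onto ℝ. -/
open Filter

/-- Key algebraic inequality. -/
lemma key_ineq (r a b : ℝ) (hr0 : 0 ≤ r) (hr1 : r < 8 / 9) :
    0 < (1 - r) * (1 + a ^ 2) * (1 + b ^ 2) + r * (1 - a * b) := by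
  rcases eq_or_lt_of_le hr0 with h | h
  · subst h
    have h1 : 0 < 1 + a ^ 2 := by positivity
    have h2 : 0 < 1 + b ^ 2 := by positivity
    nlinarith [mul_pos h1 h2]
  · have h1r : (0:ℝ) < 4 * (1 - r) := by linarith
    have H : 0 < 4 * (1 - r) * ((1 - r) * (1 + a ^ 2) * (1 + b ^ 2) + r * (1 - a * b)) := by
      nlinarith [sq_nonneg (2 * (1 - r) * (1 + a * b) - r), sq_nonneg ((1 - r) * (a - b)),
        mul_pos h (show (0:ℝ) < 8 - 9 * r by linarith)]
    nlinarith [H]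

/-- For ν > 0, λ ≥ 0, 0 ≤ r < 8/9 and φ(t) = ν(1−r)t + ν r t/(1+λ²t²), the function φ is
strictly increasing, tends to +∞ at +∞ and to −∞ at −∞, and is a bijection of ℝ onto ℝ. -/
theorem stmt_1 (ν lam r : ℝ) (hν : 0 < ν) (hlam : 0 ≤ lam) (hr0 : 0 ≤ r) (hr1 : r < 8 / 9)
    (φ : ℝ → ℝ) (hφ : ∀ t, φ t = ν * (1 - r) * t + ν * r * t / (1 + lam ^ 2 * t ^ 2)) :
    StrictMono φ ∧ Tendsto φ atTop atTop ∧ Tendsto φ atBot atBot ∧ Function.Bijective φ := by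
  have hden : ∀ t : ℝ, 0 < 1 + lam ^ 2 * t ^ 2 := fun t => by positivity
  have h1r : 0 < 1 - r := by linarith
  have hmono : StrictMono φ := by
    intro t s hts
    rw [hφ t, hφ s]
    have hDt := hden t
    have hDs := hden s
    have key : 0 < (1 - r) * (1 + (lam * s) ^ 2) * (1 + (lam * t) ^ 2)
        + r * (1 - (lam * s) * (lam * t)) := key_ineq r (lam * s) (lam * t) hr0 hr1
    rw [add_div' _ _ _ (ne_of_gt hDt), add_div' _ _ _ (ne_of_gt hDs),
      div_lt_div_iff₀ hDt hDs]
    nlinarith [mul_pos (mul_pos hν (sub_pos.mpr hts)) key]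
  have htop : Tendsto φ atTop atTop := by
    apply tendsto_atTop_mono' _ _ (tendsto_id.const_mul_atTop (mul_pos hν h1r))
    filter_upwards [eventually_ge_atTop (0:ℝ)] with t ht
    rw [hφ t]
    have : 0 ≤ ν * r * t / (1 + lam ^ 2 * t ^ 2) := by positivity
    simp only [id]
    linarith
  have hbot : Tendsto φ atBot atBot := by
    apply tendsto_atBot_mono' _ _ (tendsto_id.const_mul_atBot (mul_pos hν h1r))
    filter_upwards [eventually_le_atBot (0:ℝ)] with t ht
    rw [hφ t]
    have : ν * r * t / (1 + lam ^ 2 * t ^ 2) ≤ 0 := by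
      apply div_nonpos_of_nonpos_of_nonneg
      · exact mul_nonpos_of_nonneg_of_nonpos (by positivity) ht
      · exact (hden t).le
    simp only [id]
    linarith
  have hcont : Continuous φ := by
    have : φ = fun t => ν * (1 - r) * t + ν * r * t / (1 + lam ^ 2 * t ^ 2) := funext hφ
    rw [this]
    exact (continuous_const.mul continuous_id).add
      ((continuous_const.mul continuous_id).div (by continuity) fun t => (hden t).ne')
  exact ⟨hmono, htop, hbot, hmono.injective, hcont.surjective htop hbot⟩
end

section
/- Let ν > 0, λ ≥ 0, 0 ≤ r < 8/9, and let ψ be the inverse of φ(t) = ν(1−r)t + ν r t/(1+λ²t²). Then for every h > 0 and every q, s ∈ ℝ there exists a unique κ ∈ ℝ such that ∫₀^h ψ(q t + κ) dt + s = 0. -/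
open Filter intervalIntegral MeasureTheory

lemma stmt_3_key (r u : ℝ) (hr0 : 0 ≤ r) (hr1 : r < 8 / 9) (hu : 0 ≤ u) :
    0 < (1 + u) ^ 2 - r * (u ^ 2 + 3 * u) := by
  rcases le_or_gt u 1 with h | h
  · nlinarith [mul_nonneg (sub_nonneg.2 h) (by linarith : (0:ℝ) ≤ 5 - u)]
  · nlinarith [sq_nonneg (u - 3), mul_pos (by linarith : (0:ℝ) < 8 / 9 - r) (by linarith : (0:ℝ) < u),
      mul_nonneg (by linarith : (0:ℝ) ≤ 8 / 9 - r) (sq_nonneg u)]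

/-- For ν > 0, λ ≥ 0, 0 ≤ r < 8/9 and ψ the inverse of φ(t) = ν(1−r)t + ν r t/(1+λ²t²):
for every h > 0 and q, s ∈ ℝ there is a unique κ ∈ ℝ with ∫₀^h ψ(q t + κ) dt + s = 0. -/
theorem stmt_3 (ν lam r : ℝ) (hν : 0 < ν) (hlam : 0 ≤ lam) (hr0 : 0 ≤ r) (hr1 : r < 8 / 9)
    (φ ψ : ℝ → ℝ) (hφ : ∀ t, φ t = ν * (1 - r) * t + ν * r * t / (1 + lam ^ 2 * t ^ 2))
    (hψl : Function.LeftInverse ψ φ) (hψr : Function.RightInverse ψ φ) :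
    ∀ h q s : ℝ, 0 < h →
      ∃! κ : ℝ, (∫ t in (0 : ℝ)..h, ψ (q * t + κ)) + s = 0 := by
  have hden : ∀ t : ℝ, 0 < 1 + lam ^ 2 * t ^ 2 := fun t => by positivity
  -- φ is strictly monotone
  have hφd : ∀ t : ℝ, HasDerivAt φ
      (ν * (1 - r) + (ν * r * (1 + lam ^ 2 * t ^ 2) - ν * r * t * (lam ^ 2 * (2 * t ^ 1))) /
        (1 + lam ^ 2 * t ^ 2) ^ 2) t := by
    intro t
    have h1 : HasDerivAt (fun t : ℝ => ν * (1 - r) * t) (ν * (1 - r)) t := by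
      simpa using (hasDerivAt_id t).const_mul (ν * (1 - r))
    have hu : HasDerivAt (fun t : ℝ => ν * r * t) (ν * r) t := by
      simpa using (hasDerivAt_id t).const_mul (ν * r)
    have hv : HasDerivAt (fun t : ℝ => 1 + lam ^ 2 * t ^ 2) (lam ^ 2 * (2 * t ^ 1)) t := by
      simpa using ((hasDerivAt_pow 2 t).const_mul (lam ^ 2)).const_add 1
    have hd := h1.add (hu.div hv (hden t).ne')
    have heq : φ = fun t => ν * (1 - r) * t + ν * r * t / (1 + lam ^ 2 * t ^ 2) :=
      funext hφ
    rw [heq]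
    exact hd
  have hφmono : StrictMono φ := by
    apply strictMono_of_deriv_pos
    intro t
    rw [(hφd t).deriv]
    have key := stmt_3_key r (lam ^ 2 * t ^ 2) hr0 hr1 (by positivity)
    have h2 : 0 < ν * (1 - r) * (1 + lam ^ 2 * t ^ 2) ^ 2 +
        (ν * r * (1 + lam ^ 2 * t ^ 2) - ν * r * t * (lam ^ 2 * (2 * t ^ 1))) := by
      nlinarith [mul_pos hν key]
    have hd2 : 0 < (1 + lam ^ 2 * t ^ 2) ^ 2 := by positivity
    have h3 := div_pos h2 hd2
    calc (0:ℝ) < (ν * (1 - r) * (1 + lam ^ 2 * t ^ 2) ^ 2 +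
        (ν * r * (1 + lam ^ 2 * t ^ 2) - ν * r * t * (lam ^ 2 * (2 * t ^ 1)))) /
        (1 + lam ^ 2 * t ^ 2) ^ 2 := h3
      _ = _ := by field_simp; try ring
  -- ψ is strictly monotone, surjective, continuous
  have hψmono : StrictMono ψ := fun a b hab => by
    have h := hφmono.lt_iff_lt (a := ψ a) (b := ψ b)
    rw [hψr a, hψr b] at h
    exact h.mp hab
  have hψsurj : Function.Surjective ψ := hψl.surjective
  have hψcont : Continuous ψ := hψmono.monotone.continuous_of_surjective hψsurj
  intro h q s hh
  -- the function κ ↦ ∫₀^h ψ(q t + κ)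
  set G : ℝ → ℝ := fun κ => ∫ t in (0:ℝ)..h, ψ (q * t + κ) with hG
  have hint : ∀ κ, IntervalIntegrable (fun t => ψ (q * t + κ)) volume 0 h := fun κ =>
    (hψcont.comp (by continuity)).intervalIntegrable 0 h
  have hGcont : Continuous G := by
    apply continuous_parametric_intervalIntegral_of_continuous'
      (f := fun κ t => ψ (q * t + κ)) (μ := volume)
    exact hψcont.comp (by fun_prop)
  have hGmono : StrictMono G := by
    intro a b hab
    rw [hG]
    simp only
    rw [show (∫ t in (0:ℝ)..h, ψ (q * t + b)) =
        (∫ t in (0:ℝ)..h, ψ (q * t + a)) + ∫ t in (0:ℝ)..h, (ψ (q * t + b) - ψ (q * t + a))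
      from by rw [intervalIntegral.integral_sub (hint b) (hint a)]; ring]
    have hpos : 0 < ∫ t in (0:ℝ)..h, (ψ (q * t + b) - ψ (q * t + a)) := by
      apply intervalIntegral.intervalIntegral_pos_of_pos_on ((hint b).sub (hint a))
      · intro x _
        have : q * x + a < q * x + b := by linarith
        linarith [hψmono this]
      · exact hh
    linarith
  -- lower and upper bounds for G
  have hbound_lo : ∀ κ, h * ψ (κ - |q| * h) ≤ G κ := by
    intro κ
    have : (∫ t in (0:ℝ)..h, ψ (κ - |q| * h)) ≤ G κ := by
      apply intervalIntegral.integral_mono_on hh.le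
        (intervalIntegrable_const) (hint κ)
      intro x hx
      apply hψmono.monotone
      have h1 : |q * x| ≤ |q| * h := by
        rw [abs_mul]
        have : |x| ≤ h := by rw [abs_of_nonneg hx.1]; exact hx.2
        exact mul_le_mul_of_nonneg_left this (abs_nonneg q)
      have := neg_abs_le (q * x)
      linarith
    simpa using this
  have hbound_hi : ∀ κ, G κ ≤ h * ψ (κ + |q| * h) := by
    intro κ
    have : G κ ≤ ∫ t in (0:ℝ)..h, ψ (κ + |q| * h) := by
      apply intervalIntegral.integral_mono_on hh.le (hint κ) intervalIntegrable_const
      intro x hx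
      apply hψmono.monotone
      have h1 : |q * x| ≤ |q| * h := by
        rw [abs_mul]
        have : |x| ≤ h := by rw [abs_of_nonneg hx.1]; exact hx.2
        exact mul_le_mul_of_nonneg_left this (abs_nonneg q)
      have := le_abs_self (q * x)
      linarith
    simpa using this
  -- ψ tends to ±∞
  have hψtop : Tendsto ψ atTop atTop :=
    tendsto_atTop_atTop_of_monotone hψmono.monotone fun b => (hψsurj b).imp
      fun a ha => ha.ge
  have hψbot : Tendsto ψ atBot atBot :=
    tendsto_atBot_atBot_of_monotone hψmono.monotone fun b => (hψsurj b).imp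
      fun a ha => ha.le
  have hGtop : Tendsto G atTop atTop := by
    apply tendsto_atTop_mono hbound_lo
    exact (hψtop.comp (tendsto_atTop_add_const_right _ _ tendsto_id)).const_mul_atTop hh
  have hGbot : Tendsto G atBot atBot := by
    apply tendsto_atBot_mono hbound_hi
    exact (hψbot.comp (tendsto_atBot_add_const_right _ _ tendsto_id)).const_mul_atBot hh
  have hGsurj : Function.Surjective G := hGcont.surjective hGtop hGbot
  obtain ⟨κ, hκ⟩ := hGsurj (-s)
  refine ⟨κ, ?_, fun y hy => ?_⟩
  · show G κ + s = 0
    rw [hκ]; ring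
  · have hy' : G y + s = 0 := hy
    exact hGmono.injective (by rw [hκ]; linarith)
end

section
/- Let ν > 0, λ ≥ 0, 0 ≤ r < 8/9, let ψ be the inverse of φ(t) = ν(1−r)t + ν r t/(1+λ²t²), and fix h > 0 and s ∈ ℝ. Suppose κ : ℝ → ℝ is differentiable and satisfies ∫₀^h ψ(q t + κ(q)) dt = −s for every q ∈ ℝ. Then for every q ∈ ℝ: (i) ∫₀^h (t + κ'(q)) ψ'(q t + κ(q)) dt = 0, i.e. κ'(q) = −(∫₀^h t ψ'(q t + κ(q)) dt)/(∫₀^h ψ'(q t + κ(q)) dt); and (ii) κ'(q) < 0. -/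
open MeasureTheory Set


/-- For ν > 0, λ ≥ 0, 0 ≤ r < 8/9, ψ the inverse of φ(t) = ν(1−r)t + ν r t/(1+λ²t²),
h > 0, s ∈ ℝ, and κ : ℝ → ℝ differentiable with ∫₀^h ψ(q t + κ(q)) dt = −s for all q:
then for every q, ∫₀^h (t + κ'(q)) ψ'(q t + κ(q)) dt = 0, equivalently
κ'(q) = −(∫₀^h t ψ'(q t + κ(q)) dt)/(∫₀^h ψ'(q t + κ(q)) dt), and κ'(q) < 0. -/
theorem stmt_5 (ν lam r : ℝ) (hν : 0 < ν) (hlam : 0 ≤ lam) (hr0 : 0 ≤ r) (hr1 : r < 8 / 9)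
    (φ ψ : ℝ → ℝ) (hφ : ∀ t, φ t = ν * (1 - r) * t + ν * r * t / (1 + lam ^ 2 * t ^ 2))
    (hψl : Function.LeftInverse ψ φ) (hψr : Function.RightInverse ψ φ)
    (h s : ℝ) (hh : 0 < h)
    (κ : ℝ → ℝ) (hκ : Differentiable ℝ κ)
    (hint : ∀ q : ℝ, (∫ t in (0 : ℝ)..h, ψ (q * t + κ q)) = -s) :
    ∀ q : ℝ,
      (∫ t in (0 : ℝ)..h, (t + deriv κ q) * deriv ψ (q * t + κ q)) = 0 ∧
      deriv κ q = -(∫ t in (0 : ℝ)..h, t * deriv ψ (q * t + κ q)) /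
        (∫ t in (0 : ℝ)..h, deriv ψ (q * t + κ q)) ∧
      deriv κ q < 0 := by
  -- D is the derivative of φ
  set D : ℝ → ℝ := fun t => ν * (1 - r) + ν * r * (1 - lam ^ 2 * t ^ 2) / (1 + lam ^ 2 * t ^ 2) ^ 2
    with hDdef
  have hden : ∀ u : ℝ, (0:ℝ) < 1 + lam ^ 2 * u ^ 2 := fun u => by positivity
  have hD : ∀ t, HasDerivAt φ (D t) t := by
    intro t
    have h1 : HasDerivAt (fun u : ℝ => ν * (1 - r) * u) (ν * (1 - r)) t := by
      simpa using (hasDerivAt_id t).const_mul (ν * (1 - r))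
    have h2 : HasDerivAt (fun u : ℝ => ν * r * u / (1 + lam ^ 2 * u ^ 2))
        (ν * r * (1 - lam ^ 2 * t ^ 2) / (1 + lam ^ 2 * t ^ 2) ^ 2) t := by
      have hn : HasDerivAt (fun u : ℝ => ν * r * u) (ν * r) t := by
        simpa using (hasDerivAt_id t).const_mul (ν * r)
      have hd : HasDerivAt (fun u : ℝ => 1 + lam ^ 2 * u ^ 2) (lam ^ 2 * (2 * t)) t := by
        simpa using (((hasDerivAt_pow 2 t).const_mul (lam^2)).const_add 1)
      have := hn.div hd (ne_of_gt (hden t))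
      refine this.congr_deriv ?_
      have h0 := ne_of_gt (hden t)
      ring
    have heq : φ = fun u => ν * (1 - r) * u + ν * r * u / (1 + lam ^ 2 * u ^ 2) := funext hφ
    rw [heq]
    exact h1.add h2
  -- bounds on D
  have hc : 0 < ν * (1 - 9 * r / 8) := by nlinarith
  have key1 : ∀ x : ℝ, 0 ≤ x → -(1/8 : ℝ) ≤ (1 - x) / (1 + x) ^ 2 := by
    intro x hx0
    rw [le_div_iff₀ (by positivity)]
    nlinarith [sq_nonneg (x - 3)]
  have key2 : ∀ x : ℝ, 0 ≤ x → (1 - x) / (1 + x) ^ 2 ≤ 1 := by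
    intro x hx0
    rw [div_le_iff₀ (by positivity)]
    nlinarith
  have hνr : 0 ≤ ν * r := mul_nonneg hν.le hr0
  have hDlb : ∀ t, ν * (1 - 9 * r / 8) ≤ D t := by
    intro t
    have hg := key1 (lam ^ 2 * t ^ 2) (by positivity)
    have h2 := mul_le_mul_of_nonneg_left hg hνr
    have h3 : ν * r * (1 - lam ^ 2 * t ^ 2) / (1 + lam ^ 2 * t ^ 2) ^ 2
        = ν * r * ((1 - lam ^ 2 * t ^ 2) / (1 + lam ^ 2 * t ^ 2) ^ 2) := by ring
    simp only [hDdef]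
    rw [h3]
    nlinarith
  have hDub : ∀ t, D t ≤ ν := by
    intro t
    have hg := key2 (lam ^ 2 * t ^ 2) (by positivity)
    have h2 := mul_le_mul_of_nonneg_left hg hνr
    have h3 : ν * r * (1 - lam ^ 2 * t ^ 2) / (1 + lam ^ 2 * t ^ 2) ^ 2
        = ν * r * ((1 - lam ^ 2 * t ^ 2) / (1 + lam ^ 2 * t ^ 2) ^ 2) := by ring
    simp only [hDdef]
    rw [h3]
    nlinarith
  have hDpos : ∀ t, 0 < D t := fun t => lt_of_lt_of_le hc (hDlb t)
  -- φ strictly monotone, ψ continuous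
  have hφmono : StrictMono φ := by
    apply strictMono_of_deriv_pos
    intro x
    rw [(hD x).deriv]
    exact hDpos x
  have hψmono : StrictMono ψ := by
    intro a b hab
    have : φ (ψ a) < φ (ψ b) := by rw [hψr a, hψr b]; exact hab
    exact hφmono.lt_iff_lt.mp this
  have hψsurj : Function.Surjective ψ := fun x => ⟨φ x, hψl x⟩
  have hψcont : Continuous ψ := by
    have := (StrictMono.orderIsoOfSurjective ψ hψmono hψsurj).continuous
    rwa [StrictMono.coe_orderIsoOfSurjective] at this
  -- derivative of ψ
  have hψd : ∀ x, HasDerivAt ψ (D (ψ x))⁻¹ x := fun x =>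
    HasDerivAt.of_local_left_inverse hψcont.continuousAt (hD (ψ x))
      (ne_of_gt (hDpos _)) (Filter.Eventually.of_forall hψr)
  have hderivψ : ∀ x, deriv ψ x = (D (ψ x))⁻¹ := fun x => (hψd x).deriv
  have hψ'pos : ∀ x, 0 < deriv ψ x := fun x => by
    rw [hderivψ x]; exact inv_pos.mpr (hDpos _)
  set K : ℝ := (ν * (1 - 9 * r / 8))⁻¹ with hKdef
  have hψ'ub : ∀ x, deriv ψ x ≤ K := fun x => by
    rw [hderivψ x]
    exact inv_anti₀ hc (hDlb _)
  have hKpos : 0 < K := inv_pos.mpr hc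
  -- continuity of D and deriv ψ
  have hDcont : Continuous D := by
    have h1 : Continuous fun t : ℝ => ν * r * (1 - lam ^ 2 * t ^ 2) := by fun_prop
    have h2 : Continuous fun t : ℝ => (1 + lam ^ 2 * t ^ 2) ^ 2 := by fun_prop
    exact continuous_const.add (h1.div h2 (fun x => by positivity))
  have hψ'cont : Continuous (deriv ψ) := by
    have : Continuous fun x => (D (ψ x))⁻¹ :=
      (hDcont.comp hψcont).inv₀ fun x => ne_of_gt (hDpos _)
    rwa [show deriv ψ = fun x => (D (ψ x))⁻¹ from funext hderivψ]
  intro q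
  -- parametric integral setup
  set μ : Measure ℝ := volume.restrict (Ioc (0:ℝ) h) with hμ
  set L : ℝ → (ℝ × ℝ →L[ℝ] ℝ) := fun t =>
    t • (ContinuousLinearMap.fst ℝ ℝ ℝ) + ContinuousLinearMap.snd ℝ ℝ ℝ with hL
  have hLapply : ∀ t (v : ℝ × ℝ), L t v = t * v.1 + v.2 := fun t v => by
    simp [hL]
  set Fb : ℝ × ℝ → ℝ → ℝ := fun p t => ψ (p.1 * t + p.2) with hFb
  set Fb' : ℝ × ℝ → ℝ → (ℝ × ℝ →L[ℝ] ℝ) := fun p t => deriv ψ (p.1 * t + p.2) • L t with hFb'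
  have hinner : ∀ (t : ℝ) (p : ℝ × ℝ), HasFDerivAt (fun p : ℝ × ℝ => p.1 * t + p.2) (L t) p := by
    intro t p
    have := (L t).hasFDerivAt (x := p)
    apply this.congr_of_eventuallyEq
    filter_upwards with v
    rw [hLapply]; ring
  have hFbdiff : ∀ (t : ℝ) (p : ℝ × ℝ), HasFDerivAt (fun p => Fb p t) (Fb' p t) p := by
    intro t p
    have h1 := (hψd (p.1 * t + p.2)).comp_hasFDerivAt p (hinner t p)
    simp only [hFb', hFb, hderivψ]
    exact h1
  set p₀ : ℝ × ℝ := (q, κ q) with hp₀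
  have hLnorm : ∀ (t : ℝ), ‖L t‖ ≤ |t| + 1 := by
    intro t
    apply ContinuousLinearMap.opNorm_le_bound _ (by positivity)
    intro v
    rw [hLapply]
    calc ‖t * v.1 + v.2‖ ≤ ‖t * v.1‖ + ‖v.2‖ := norm_add_le _ _
      _ ≤ |t| * ‖v‖ + 1 * ‖v‖ := by
          rw [norm_mul, one_mul]
          gcongr
          · exact (Real.norm_eq_abs t).le
          · exact norm_fst_le v
          · exact norm_snd_le v
      _ = (|t| + 1) * ‖v‖ := by ring
  have hbound : ∀ (p : ℝ × ℝ) (t : ℝ), ‖Fb' p t‖ ≤ K * (|t| + 1) := by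
    intro p t
    simp only [hFb']
    have h1 : ‖deriv ψ (p.1 * t + p.2)‖ ≤ K := by
      rw [Real.norm_eq_abs, abs_of_pos (hψ'pos _)]; exact hψ'ub _
    apply ContinuousLinearMap.opNorm_le_bound _ (by positivity)
    intro v
    rw [ContinuousLinearMap.smul_apply]
    calc ‖deriv ψ (p.1 * t + p.2) • (L t) v‖
        = ‖deriv ψ (p.1 * t + p.2)‖ * ‖(L t) v‖ := norm_smul _ _
      _ ≤ K * ((|t| + 1) * ‖v‖) :=
          mul_le_mul h1 (le_trans ((L t).le_opNorm v)
            (mul_le_mul_of_nonneg_right (hLnorm t) (norm_nonneg v))) (norm_nonneg _) hKpos.le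
      _ = K * (|t| + 1) * ‖v‖ := by ring
  have hboundint : Integrable (fun t => K * (|t| + 1)) μ := by
    rw [hμ]
    exact (continuous_const.mul ((continuous_abs).add continuous_const)).integrableOn_Ioc
  have hFcont : ∀ p : ℝ × ℝ, Continuous (Fb p) := fun p => by
    simp only [hFb]; exact hψcont.comp (by fun_prop)
  have hLcont : Continuous L := by
    simp only [hL]
    exact (continuous_id.smul continuous_const).add continuous_const
  have hF'cont : Continuous (Fb' p₀) := by
    simp only [hFb']
    exact (hψ'cont.comp (by fun_prop)).smul hLcont
  have hFint : Integrable (Fb p₀) μ := by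
    rw [hμ]; exact (hFcont p₀).integrableOn_Ioc
  have key := hasFDerivAt_integral_of_dominated_of_fderiv_le
    (F := Fb) (F' := Fb') (x₀ := p₀) (bound := fun t => K * (|t| + 1)) (s := Set.univ)
    Filter.univ_mem
    (Filter.Eventually.of_forall fun p => (hFcont p).aestronglyMeasurable)
    hFint
    hF'cont.aestronglyMeasurable
    (Filter.Eventually.of_forall fun t p _ => hbound p t)
    hboundint
    (Filter.Eventually.of_forall fun t p _ => hFbdiff t p)
  have hcurve : HasDerivAt (fun q : ℝ => ((q, κ q) : ℝ × ℝ)) (1, deriv κ q) q :=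
    (hasDerivAt_id q).prodMk (hκ q).hasDerivAt
  have hcomp := key.comp_hasDerivAt q hcurve
  have hconsteq : ((fun p : ℝ × ℝ => ∫ t, Fb p t ∂μ) ∘ fun q : ℝ => (q, κ q))
      = fun _ : ℝ => -s := by
    funext q'
    have h0 := hint q'
    rw [intervalIntegral.integral_of_le hh.le] at h0
    simp only [Function.comp]
    exact h0
  rw [hconsteq] at hcomp
  have hzero : (∫ t, Fb' p₀ t ∂μ) (1, deriv κ q) = 0 :=
    ((hasDerivAt_const q (-s)).unique hcomp).symm
  have hF'int : Integrable (Fb' p₀) μ :=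
    Integrable.mono' hboundint hF'cont.aestronglyMeasurable
      (Filter.Eventually.of_forall fun t => hbound p₀ t)
  have happly := ContinuousLinearMap.integral_apply hF'int (1, deriv κ q)
  rw [happly] at hzero
  -- goal 1
  have hgoal1 : (∫ t in (0:ℝ)..h, (t + deriv κ q) * deriv ψ (q * t + κ q)) = 0 := by
    rw [intervalIntegral.integral_of_le hh.le]
    have hcongr : (∫ x in Ioc (0:ℝ) h, (x + deriv κ q) * deriv ψ (q * x + κ q))
        = ∫ x, (Fb' p₀ x) (1, deriv κ q) ∂μ := by
      apply integral_congr_ae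
      filter_upwards with t
      simp only [hFb', ContinuousLinearMap.smul_apply, hLapply, smul_eq_mul]
      ring
    rw [hcongr, hzero]
  -- linearity
  have hψ'c : Continuous fun t => deriv ψ (q * t + κ q) := hψ'cont.comp (by fun_prop)
  have hBi : IntervalIntegrable (fun t => deriv ψ (q * t + κ q)) volume 0 h :=
    hψ'c.intervalIntegrable 0 h
  have hAi : IntervalIntegrable (fun t => t * deriv ψ (q * t + κ q)) volume 0 h :=
    (continuous_id.mul hψ'c).intervalIntegrable 0 h
  set A := ∫ t in (0:ℝ)..h, t * deriv ψ (q * t + κ q) with hA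
  set B := ∫ t in (0:ℝ)..h, deriv ψ (q * t + κ q) with hB
  have hsplit : (∫ t in (0:ℝ)..h, (t + deriv κ q) * deriv ψ (q * t + κ q))
      = A + deriv κ q * B := by
    have e : ∀ t : ℝ, (t + deriv κ q) * deriv ψ (q * t + κ q)
        = t * deriv ψ (q * t + κ q) + deriv κ q * deriv ψ (q * t + κ q) := fun t => by ring
    rw [intervalIntegral.integral_congr (fun t _ => e t),
      intervalIntegral.integral_add hAi (hBi.const_mul _),
      intervalIntegral.integral_const_mul]
  have hBpos : 0 < B :=
    intervalIntegral.intervalIntegral_pos_of_pos_on hBi (fun x _ => hψ'pos _) hh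
  have hApos : 0 < A :=
    intervalIntegral.intervalIntegral_pos_of_pos_on hAi
      (fun x hx => mul_pos hx.1 (hψ'pos _)) hh
  have hrel : A + deriv κ q * B = 0 := by rw [← hsplit]; exact hgoal1
  have hκ' : deriv κ q = -A / B := by
    field_simp
    linarith
  refine ⟨hgoal1, hκ', ?_⟩
  rw [hκ']
  exact div_neg_of_neg_of_pos (neg_neg_of_pos hApos) hBpos
end

section
/- Let h > 0 and 0 < m ≤ M be real numbers, and let g : [0,h] → ℝ be integrable with m ≤ g(t) ≤ M for almost every t ∈ [0,h]. Define K' = −(∫₀^h t g(t) dt)/(∫₀^h g(t) dt). Then −M h/(2m) ≤ K' ≤ −m h/(2M). -/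
open MeasureTheory

/-- For h > 0, 0 < m ≤ M and g integrable on [0,h] with m ≤ g ≤ M a.e. on [0,h],
the quantity K' = −(∫₀^h t g(t) dt)/(∫₀^h g(t) dt) satisfies −Mh/(2m) ≤ K' ≤ −mh/(2M). -/
theorem stmt_6 (h m M : ℝ) (hh : 0 < h) (hm : 0 < m) (hmM : m ≤ M)
    (g : ℝ → ℝ) (hg : IntegrableOn g (Set.Icc 0 h))
    (hbound : ∀ᵐ t ∂(volume.restrict (Set.Icc 0 h)), m ≤ g t ∧ g t ≤ M)
    (K' : ℝ)
    (hK' : K' = -(∫ t in (0 : ℝ)..h, t * g t) / (∫ t in (0 : ℝ)..h, g t)) :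
    -(M * h) / (2 * m) ≤ K' ∧ K' ≤ -(m * h) / (2 * M) := by
  set μ := volume.restrict (Set.Icc (0:ℝ) h) with hμ
  have hM : 0 < M := lt_of_lt_of_le hm hmM
  have htmem : ∀ᵐ t ∂μ, t ∈ Set.Icc (0:ℝ) h := ae_restrict_mem measurableSet_Icc
  have hg' : Integrable g μ := hg
  -- integrability of t * g t
  have hA_int : Integrable (fun t => t * g t) μ := by
    apply hg'.bdd_mul (c := h) aestronglyMeasurable_id
    filter_upwards [htmem] with t ht
    simp only [id_eq, Real.norm_eq_abs]
    rw [abs_of_nonneg ht.1]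
    exact ht.2
  have hid_int : Integrable (fun t : ℝ => t) μ := by
    rw [hμ]
    exact continuous_id.integrableOn_Icc
  have hvol : (volume (Set.Icc (0:ℝ) h)).toReal = h := by
    rw [Real.volume_Icc]
    simp [ENNReal.toReal_ofReal hh.le]
  -- value of ∫ t
  have hid_val : (∫ t, t ∂μ) = h^2 / 2 := by
    have : (∫ t in Set.Icc (0:ℝ) h, t) = ∫ t in (0:ℝ)..h, t := by
      rw [intervalIntegral.integral_of_le hh.le, integral_Icc_eq_integral_Ioc]
    rw [hμ, this, integral_id]
    ring
  -- bounds on B = ∫ g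
  set B := ∫ t, g t ∂μ with hB
  have hB_lb : m * h ≤ B := by
    have := integral_mono_ae (integrable_const m) hg'
      (by filter_upwards [hbound] with t ht; exact ht.1)
    simp only [hμ, integral_const, measureReal_def, MeasurableSet.univ, Measure.restrict_apply, Set.univ_inter, smul_eq_mul, hvol] at this
    linarith [this]
  have hB_ub : B ≤ M * h := by
    have := integral_mono_ae hg' (integrable_const M)
      (by filter_upwards [hbound] with t ht; exact ht.2)
    simp only [hμ, integral_const, measureReal_def, MeasurableSet.univ, Measure.restrict_apply, Set.univ_inter, smul_eq_mul, hvol] at this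
    linarith [this]
  -- bounds on A = ∫ t g
  set A := ∫ t, t * g t ∂μ with hA
  have hA_lb : m * (h^2/2) ≤ A := by
    have h1 : (∫ t, m * t ∂μ) ≤ A := by
      apply integral_mono_ae (hid_int.const_mul m) hA_int
      filter_upwards [hbound, htmem] with t ht ht'
      exact mul_le_mul_of_nonneg_right ht.1 ht'.1 |>.trans_eq (mul_comm _ _) |>.trans_eq rfl
    rwa [integral_const_mul, hid_val] at h1
  have hA_ub : A ≤ M * (h^2/2) := by
    have h1 : A ≤ (∫ t, M * t ∂μ) := by
      apply integral_mono_ae hA_int (hid_int.const_mul M)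
      filter_upwards [hbound, htmem] with t ht ht'
      calc t * g t ≤ t * M := mul_le_mul_of_nonneg_left ht.2 ht'.1
        _ = M * t := mul_comm _ _
    rwa [integral_const_mul, hid_val] at h1
  -- rewrite K'
  have hKval : K' = -A / B := by
    rw [hK', intervalIntegral.integral_of_le hh.le, intervalIntegral.integral_of_le hh.le,
      hA, hB, hμ, integral_Icc_eq_integral_Ioc, integral_Icc_eq_integral_Ioc]
  have hBpos : 0 < B := lt_of_lt_of_le (by positivity) hB_lb
  constructor
  · rw [hKval, div_le_div_iff₀ (by positivity) hBpos, neg_mul, neg_mul, neg_le_neg_iff]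
    nlinarith [mul_le_mul hA_ub hB_lb (by positivity) (by positivity : (0:ℝ) ≤ M * (h^2/2))]
  · rw [hKval, div_le_div_iff₀ hBpos (by positivity), neg_mul, neg_mul, neg_le_neg_iff]
    nlinarith [mul_le_mul hB_ub hA_lb (by positivity) (by positivity : (0:ℝ) ≤ M * h)]
end

section
/- Let h > 0 and 0 < m ≤ M be real numbers with 3M ≤ 4m, and let g : [0,h] → ℝ be integrable with m ≤ g(t) ≤ M for almost every t ∈ [0,h]. Define K' = −(∫₀^h t g(t) dt)/(∫₀^h g(t) dt). Then h³(m/3 − M/4) ≤ ∫₀^h t (t + K') g(t) dt ≤ h³(M/3 − m/4), and moreover ∫₀^h t (t + K') g(t) dt > 0. -/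
open MeasureTheory

/-- For h > 0, 0 < m ≤ M with 3M ≤ 4m and g integrable on [0,h] with m ≤ g ≤ M a.e.,
setting K' = −(∫₀^h t g)/(∫₀^h g), one has
h³(m/3 − M/4) ≤ ∫₀^h t (t + K') g(t) dt ≤ h³(M/3 − m/4), and this integral is positive. -/
theorem stmt_7 (h m M : ℝ) (hh : 0 < h) (hm : 0 < m) (hmM : m ≤ M) (h3M : 3 * M ≤ 4 * m)
    (g : ℝ → ℝ) (hg : IntegrableOn g (Set.Icc 0 h))
    (hbound : ∀ᵐ t ∂(volume.restrict (Set.Icc 0 h)), m ≤ g t ∧ g t ≤ M)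
    (K' : ℝ)
    (hK' : K' = -(∫ t in (0 : ℝ)..h, t * g t) / (∫ t in (0 : ℝ)..h, g t)) :
    (h ^ 3 * (m / 3 - M / 4) ≤ ∫ t in (0 : ℝ)..h, t * (t + K') * g t) ∧
    (∫ t in (0 : ℝ)..h, t * (t + K') * g t) ≤ h ^ 3 * (M / 3 - m / 4) ∧
    0 < ∫ t in (0 : ℝ)..h, t * (t + K') * g t := by
  have huIcc : Set.uIcc (0:ℝ) h = Set.Icc 0 h := Set.uIcc_of_le hh.le
  -- integrability of φ * g for continuous φ
  have key : ∀ φ : ℝ → ℝ, Continuous φ →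
      IntervalIntegrable (fun t => φ t * g t) volume 0 h := by
    intro φ hφ
    obtain ⟨Cb, hCb⟩ := isCompact_Icc.exists_bound_of_continuousOn
      (s := Set.Icc (0:ℝ) h) hφ.continuousOn
    have : IntegrableOn (fun t => φ t * g t) (Set.Icc 0 h) := by
      refine Integrable.bdd_mul (c := Cb) hg hφ.aestronglyMeasurable.restrict ?_
      exact (ae_restrict_iff' measurableSet_Icc).2 (ae_of_all _ hCb)
    rw [← huIcc] at this
    exact this.intervalIntegrable
  have iA : IntervalIntegrable g volume 0 h := by
    rw [← huIcc] at hg; exact hg.intervalIntegrable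
  have iB : IntervalIntegrable (fun t => t * g t) volume 0 h := key _ continuous_id
  have iC : IntervalIntegrable (fun t => t ^ 2 * g t) volume 0 h := key _ (continuous_pow 2)
  set A := ∫ t in (0:ℝ)..h, g t with hA
  set B := ∫ t in (0:ℝ)..h, t * g t with hB
  set Cc := ∫ t in (0:ℝ)..h, t ^ 2 * g t with hCc
  -- expansion lemma
  have expand : ∀ c : ℝ, (∫ t in (0:ℝ)..h, (t + c) ^ 2 * g t) = Cc + 2 * c * B + c ^ 2 * A := by
    intro c
    have e : (∫ t in (0:ℝ)..h, (t + c) ^ 2 * g t)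
        = ∫ t in (0:ℝ)..h, (t ^ 2 * g t + (2 * c * (t * g t) + c ^ 2 * g t)) := by
      apply intervalIntegral.integral_congr
      intro t _; ring
    rw [e, intervalIntegral.integral_add iC ((iB.const_mul _).add (iA.const_mul _)),
      intervalIntegral.integral_add (iB.const_mul _) (iA.const_mul _),
      intervalIntegral.integral_const_mul, intervalIntegral.integral_const_mul]
    ring
  -- value of the target integral
  have hIval : (∫ t in (0:ℝ)..h, t * (t + K') * g t) = Cc + K' * B := by
    have e : (∫ t in (0:ℝ)..h, t * (t + K') * g t)
        = ∫ t in (0:ℝ)..h, (t ^ 2 * g t + K' * (t * g t)) := by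
      apply intervalIntegral.integral_congr
      intro t _; ring
    rw [e, intervalIntegral.integral_add iC (iB.const_mul _),
      intervalIntegral.integral_const_mul]
  -- bounds on A
  have hAl : m * h ≤ A := by
    have := intervalIntegral.integral_mono_ae_restrict hh.le
      (intervalIntegrable_const (c := m)) iA (hbound.mono fun t ht => ht.1)
    simpa [mul_comm] using this
  have hAu : A ≤ M * h := by
    have := intervalIntegral.integral_mono_ae_restrict hh.le
      iA (intervalIntegrable_const (c := M)) (hbound.mono fun t ht => ht.2)
    simpa [mul_comm] using this
  have hApos : (0:ℝ) < A := lt_of_lt_of_le (by positivity) hAl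
  have hKA : K' * A = -B := by
    rw [hK']; field_simp
  have hBeq : B = -(K' * A) := by linarith
  -- polynomial integral
  have poly : ∀ c : ℝ, (∫ t in (0:ℝ)..h, (t + c) ^ 2)
      = h ^ 3 / 3 + c * h ^ 2 + c ^ 2 * h := by
    intro c
    have e : (∫ t in (0:ℝ)..h, (t + c) ^ 2)
        = ∫ t in (0:ℝ)..h, (t ^ 2 + (2 * c * t + c ^ 2)) := by
      apply intervalIntegral.integral_congr
      intro t _; ring
    rw [e, intervalIntegral.integral_add ((continuous_pow 2).intervalIntegrable _ _)
        ((by fun_prop : Continuous fun t : ℝ => 2 * c * t + c ^ 2).intervalIntegrable _ _),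
      intervalIntegral.integral_add
        ((by fun_prop : Continuous fun t : ℝ => 2 * c * t).intervalIntegrable _ _)
        (continuous_const.intervalIntegrable _ _),
      integral_pow, intervalIntegral.integral_const_mul,
      integral_id, intervalIntegral.integral_const]
    norm_num
    ring
  -- lower bound : m * h^3/12 ≤ ∫ (t+K')^2 g = Cc + K' * B
  have low : m * (h ^ 3 / 12) ≤ Cc + K' * B := by
    have h1 : (∫ t in (0:ℝ)..h, m * (t + K') ^ 2)
        ≤ ∫ t in (0:ℝ)..h, (t + K') ^ 2 * g t := by
      refine intervalIntegral.integral_mono_ae_restrict hh.le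
        ((by fun_prop : Continuous fun t : ℝ => m * (t + K') ^ 2).intervalIntegrable _ _)
        (key _ (by fun_prop)) (hbound.mono fun t ht => ?_)
      dsimp only
      nlinarith [sq_nonneg (t + K'), ht.1]
    rw [intervalIntegral.integral_const_mul, poly, expand] at h1
    have h2 : Cc + 2 * K' * B + K' ^ 2 * A = Cc + K' * B := by
      rw [hBeq]; ring
    rw [h2] at h1
    have h3 : m * (h ^ 3 / 12) ≤ m * (h ^ 3 / 3 + K' * h ^ 2 + K' ^ 2 * h) := by
      have : 0 ≤ h * (K' + h / 2) ^ 2 := by positivity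
      nlinarith
    linarith
  -- upper bound : Cc + K' * B ≤ ∫ (t - h/2)^2 g ≤ M * h^3/12
  have up : Cc + K' * B ≤ M * (h ^ 3 / 12) := by
    have h1 : Cc + K' * B ≤ Cc + 2 * (-(h / 2)) * B + (-(h / 2)) ^ 2 * A := by
      rw [hBeq]
      nlinarith [mul_nonneg hApos.le (sq_nonneg (K' + h / 2))]
    have h2 : (∫ t in (0:ℝ)..h, (t + -(h / 2)) ^ 2 * g t)
        ≤ ∫ t in (0:ℝ)..h, M * (t + -(h / 2)) ^ 2 := by
      refine intervalIntegral.integral_mono_ae_restrict hh.le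
        (key _ (by fun_prop))
        ((by fun_prop : Continuous fun t : ℝ => M * (t + -(h / 2)) ^ 2).intervalIntegrable _ _)
        (hbound.mono fun t ht => ?_)
      dsimp only
      nlinarith [sq_nonneg (t + -(h / 2)), ht.2]
    rw [intervalIntegral.integral_const_mul, poly, expand] at h2
    have h3 : M * (h ^ 3 / 3 + -(h / 2) * h ^ 2 + (-(h / 2)) ^ 2 * h)
        = M * (h ^ 3 / 12) := by ring
    linarith
  rw [hIval]
  have hp3 : (0:ℝ) < h ^ 3 := by positivity
  refine ⟨by nlinarith, by nlinarith, by nlinarith⟩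
end

section
/- Let ν > 0, λ ≥ 0, 0 ≤ r < 8/9, h > 0 and s ∈ ℝ, and let φ(t) = ν(1−r)t + ν r t/(1+λ²t²). Suppose u : [0,h] → ℝ is differentiable on [0,h], u(0) = s, u(h) = 0, and the function z ↦ φ(u'(z)) is constant on [0,h]. Then u(z) = s(1 − z/h) for all z ∈ [0,h]; consequently u'(z) = −s/h, the shear stress σ₁₂ := r ν u'(z)/(1+λ²u'(z)²) equals −r ν s h/(h² + λ² s²), and the normal stresses satisfy σ₁₁ = −σ₂₂ = −λ u'(z) σ₁₂ = −r ν λ s²/(h² + λ² s²). -/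
lemma phi_inj' (ν lam r : ℝ) (hν : 0 < ν) (hr0 : 0 ≤ r) (hr1 : r < 8/9) {a b : ℝ}
    (hab : ν * (1 - r) * a + ν * r * a / (1 + lam ^ 2 * a ^ 2)
         = ν * (1 - r) * b + ν * r * b / (1 + lam ^ 2 * b ^ 2)) : a = b := by
  have h1 : (0:ℝ) < 1 - r := by linarith
  have da : (0:ℝ) < 1 + lam^2*a^2 := by positivity
  have db : (0:ℝ) < 1 + lam^2*b^2 := by positivity
  have B : 0 < (1-r)*(1+lam^2*a^2)*(1+lam^2*b^2) + r*(1-lam^2*a*b) := by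
    rcases eq_or_lt_of_le hr0 with hr | hr
    · have : r = 0 := hr.symm
      subst this
      nlinarith [mul_pos (mul_pos h1 da) db]
    · have key : 4*(1-r)*((1-r)*(1+lam^2*a^2)*(1+lam^2*b^2) + r*(1-lam^2*a*b))
          = (2*(1-r)*(1+lam^2*a*b)-r)^2 + r*(8-9*r) + 4*(1-r)^2*lam^2*(a-b)^2 := by ring
      have h2 : 0 < r*(8-9*r) := mul_pos hr (by linarith)
      nlinarith [sq_nonneg (2*(1-r)*(1+lam^2*a*b)-r),
        mul_nonneg (mul_nonneg (sq_nonneg (2*(1-r))) (sq_nonneg lam)) (sq_nonneg (a-b))]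
  have hE : ν * (a - b) * ((1-r)*(1+lam^2*a^2)*(1+lam^2*b^2) + r*(1-lam^2*a*b)) = 0 := by
    field_simp at hab
    linear_combination ν * hab
  rcases mul_eq_zero.1 hE with h' | h'
  · rcases mul_eq_zero.1 h' with h'' | h''
    · exact absurd h'' hν.ne'
    · linarith [sub_eq_zero.1 h'']
  · linarith

/-- Couette case: for ν > 0, λ ≥ 0, 0 ≤ r < 8/9, h > 0, s ∈ ℝ and
φ(t) = ν(1−r)t + ν r t/(1+λ²t²), if u is differentiable on [0,h] with u(0) = s, u(h) = 0
and z ↦ φ(u'(z)) constant on [0,h], then u(z) = s(1 − z/h) on [0,h], u'(z) = −s/h,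
the shear stress σ₁₂ = r ν u'/(1+λ²u'²) equals −rνsh/(h²+λ²s²), and the normal stresses
satisfy σ₁₁ = −σ₂₂ = −λ u' σ₁₂ = −rνλs²/(h²+λ²s²). -/
theorem stmt_10 (ν lam r : ℝ) (hν : 0 < ν) (hlam : 0 ≤ lam) (hr0 : 0 ≤ r) (hr1 : r < 8 / 9)
    (h s : ℝ) (hh : 0 < h)
    (φ : ℝ → ℝ) (hφ : ∀ t, φ t = ν * (1 - r) * t + ν * r * t / (1 + lam ^ 2 * t ^ 2))
    (u : ℝ → ℝ) (hu : DifferentiableOn ℝ u (Set.Icc 0 h))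
    (hu0 : u 0 = s) (huh : u h = 0)
    (hconst : ∀ z ∈ Set.Icc (0 : ℝ) h, ∀ z' ∈ Set.Icc (0 : ℝ) h,
      φ (derivWithin u (Set.Icc 0 h) z) = φ (derivWithin u (Set.Icc 0 h) z')) :
    ∀ z ∈ Set.Icc (0 : ℝ) h,
      u z = s * (1 - z / h) ∧
      derivWithin u (Set.Icc 0 h) z = -s / h ∧
      r * ν * derivWithin u (Set.Icc 0 h) z /
          (1 + lam ^ 2 * (derivWithin u (Set.Icc 0 h) z) ^ 2)
        = -(r * ν * s * h) / (h ^ 2 + lam ^ 2 * s ^ 2) ∧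
      -(lam * derivWithin u (Set.Icc 0 h) z *
          (r * ν * derivWithin u (Set.Icc 0 h) z /
            (1 + lam ^ 2 * (derivWithin u (Set.Icc 0 h) z) ^ 2)))
        = -(r * ν * lam * s ^ 2) / (h ^ 2 + lam ^ 2 * s ^ 2) := by
  have h0mem : (0:ℝ) ∈ Set.Icc (0:ℝ) h := ⟨le_refl 0, hh.le⟩
  have hhmem : h ∈ Set.Icc (0:ℝ) h := ⟨hh.le, le_refl h⟩
  set S := Set.Icc (0:ℝ) h with hS
  set c := derivWithin u S 0 with hc
  -- derivative is constant
  have hdc : ∀ z ∈ S, derivWithin u S z = c := by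
    intro z hz
    have := hconst z hz 0 h0mem
    rw [hφ, hφ] at this
    exact phi_inj' ν lam r hν hr0 hr1 this
  -- u z = u 0 + c * z
  have huz : ∀ z ∈ S, u z = s + c * z := by
    intro z hz
    have hdiff : DifferentiableOn ℝ (fun w => u w - c * w) S :=
      hu.sub ((differentiable_id.const_mul c).differentiableOn)
    have hzero : ∀ x ∈ S, fderivWithin ℝ (fun w => u w - c * w) S x = 0 := by
      intro x hx
      have hud : HasDerivWithinAt u c S x := by
        have := (hu x hx).hasDerivWithinAt
        rwa [hdc x hx] at this
      have hlin : HasDerivWithinAt (fun w : ℝ => c * w) (c * 1) S x :=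
        (hasDerivWithinAt_id x S).const_mul c
      have hsub : HasDerivWithinAt (fun w => u w - c * w) (c - c * 1) S x := hud.sub hlin
      have h0 : HasDerivWithinAt (fun w => u w - c * w) 0 S x := by
        simpa using hsub
      have h2 := h0.hasFDerivWithinAt.fderivWithin ((uniqueDiffOn_Icc hh) x hx)
      rw [h2]
      ext w
      simp
    have hconv : Convex ℝ S := convex_Icc 0 h
    have := hconv.is_const_of_fderivWithin_eq_zero hdiff hzero hz h0mem
    simp only [mul_zero, sub_zero] at this
    rw [hu0] at this
    linarith [this]
  -- value of c
  have hcval : c = -s / h := by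
    have := huz h hhmem
    rw [huh] at this
    field_simp
    linarith
  intro z hz
  have hd := hdc z hz
  rw [hcval] at hd
  have huzv := huz z hz
  rw [hcval] at huzv
  have hden : (0:ℝ) < h ^ 2 + lam ^ 2 * s ^ 2 := by positivity
  have hden2 : (0:ℝ) < 1 + lam ^ 2 * (-s/h) ^ 2 := by positivity
  refine ⟨?_, hd, ?_, ?_⟩
  · rw [huzv]; field_simp; ring
  · rw [hd]; field_simp
  · rw [hd]; field_simp
end

section
/- Let ν > 0, λ ≥ 0, 0 ≤ r < 8/9, and let φ(t) = ν(1−r)t + ν r t/(1+λ²t²) with inverse ψ. Then for every h > 0 and every q, s ∈ ℝ there exists exactly one pair (u, κ) consisting of a continuously differentiable function u : [0,h] → ℝ and a real number κ such that u(0) = s, u(h) = 0 and φ(u'(z)) = q z + κ for all z ∈ [0,h]; moreover this u is given by u(z) = s + ∫₀^z ψ(q t + κ) dt, where κ is the unique real number with ∫₀^h ψ(q t + κ) dt + s = 0. -/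
/-- For ν > 0, λ ≥ 0, 0 ≤ r < 8/9, φ(t) = ν(1−r)t + ν r t/(1+λ²t²) with inverse ψ:
for every h > 0 and q, s ∈ ℝ there is exactly one pair (u, κ), with u continuously
differentiable on [0,h], such that u(0) = s, u(h) = 0 and φ(u'(z)) = q z + κ on [0,h]
(uniqueness of u meaning equality on [0,h]); moreover u(z) = s + ∫₀^z ψ(q t + κ) dt,
where κ is the unique real number with ∫₀^h ψ(q t + κ) dt + s = 0. -/
theorem stmt_13 (ν lam r : ℝ) (hν : 0 < ν) (hlam : 0 ≤ lam) (hr0 : 0 ≤ r) (hr1 : r < 8 / 9)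
    (φ ψ : ℝ → ℝ) (hφ : ∀ t, φ t = ν * (1 - r) * t + ν * r * t / (1 + lam ^ 2 * t ^ 2))
    (hψl : Function.LeftInverse ψ φ) (hψr : Function.RightInverse ψ φ)
    (h q s : ℝ) (hh : 0 < h)
    (P : (ℝ → ℝ) → ℝ → Prop)
    (hP : ∀ (u : ℝ → ℝ) (κ : ℝ), P u κ ↔
      (DifferentiableOn ℝ u (Set.Icc 0 h) ∧
       ContinuousOn (derivWithin u (Set.Icc 0 h)) (Set.Icc 0 h) ∧
       u 0 = s ∧ u h = 0 ∧
       ∀ z ∈ Set.Icc (0 : ℝ) h, φ (derivWithin u (Set.Icc 0 h) z) = q * z + κ)) :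
    (∃ (u : ℝ → ℝ) (κ : ℝ), P u κ) ∧
    (∀ (u₁ : ℝ → ℝ) (κ₁ : ℝ) (u₂ : ℝ → ℝ) (κ₂ : ℝ),
      P u₁ κ₁ → P u₂ κ₂ → κ₁ = κ₂ ∧ Set.EqOn u₁ u₂ (Set.Icc 0 h)) ∧
    (∀ (u : ℝ → ℝ) (κ : ℝ), P u κ →
      (∀ z ∈ Set.Icc (0 : ℝ) h, u z = s + ∫ t in (0 : ℝ)..z, ψ (q * t + κ)) ∧
      (∫ t in (0 : ℝ)..h, ψ (q * t + κ)) + s = 0 ∧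
      (∀ κ' : ℝ, (∫ t in (0 : ℝ)..h, ψ (q * t + κ')) + s = 0 → κ' = κ)) := by
  classical
  -- basic properties of φ
  have hden : ∀ t : ℝ, (1 : ℝ) + lam ^ 2 * t ^ 2 ≠ 0 := fun t => by positivity
  have hφeq : φ = fun t : ℝ => ν * (1 - r) * t + ν * r * t / (1 + lam ^ 2 * t ^ 2) :=
    funext hφ
  have hφc : Continuous φ := by
    rw [hφeq]
    exact (continuous_const.mul continuous_id).add
      ((continuous_const.mul continuous_id).div (by continuity) hden)
  have hφinj : Function.Injective φ := hψl.injective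
  have hφsurj : Function.Surjective φ := hψr.surjective
  have hφ0 : φ 0 = 0 := by rw [hφ]; ring
  have hφ1 : 0 < φ 1 := by
    rw [hφ]
    have h1 : 0 < ν * (1 - r) * 1 := by nlinarith
    have h2 : 0 ≤ ν * r * 1 / (1 + lam ^ 2 * 1 ^ 2) := by positivity
    linarith
  have hφmono : StrictMono φ := by
    rcases hφc.strictMono_of_inj hφinj with hm | ha
    · exact hm
    · exfalso
      have := ha (show (0:ℝ) < 1 by norm_num)
      rw [hφ0] at this; linarith
  -- properties of ψ
  have hψmono : StrictMono ψ := by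
    intro a b hab
    have : φ (ψ a) < φ (ψ b) := by rw [hψr a, hψr b]; exact hab
    exact hφmono.lt_iff_lt.mp this
  have hψc : Continuous ψ := by
    have hpsi : ψ = ⇑(StrictMono.orderIsoOfSurjective φ hφmono hφsurj).symm := by
      funext x
      apply hφinj
      rw [hψr x]
      exact ((StrictMono.orderIsoOfSurjective φ hφmono hφsurj).apply_symm_apply x).symm.trans
        (congrFun (StrictMono.coe_orderIsoOfSurjective φ hφmono hφsurj) _)
    rw [hpsi]
    exact OrderIso.continuous _
  -- the family of integrands
  have hfc : ∀ κ : ℝ, Continuous fun t : ℝ => ψ (q * t + κ) := fun κ =>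
    hψc.comp ((continuous_const.mul continuous_id).add continuous_const)
  -- the function g whose root gives κ
  set g : ℝ → ℝ := fun κ => (∫ t in (0:ℝ)..h, ψ (q * t + κ)) + s with hg
  have hgc : Continuous g := by
    have : Continuous fun κ : ℝ => ∫ t in (0:ℝ)..h, ψ (q * t + κ) := by
      apply intervalIntegral.continuous_parametric_intervalIntegral_of_continuous'
        (μ := MeasureTheory.volume) (f := fun κ t => ψ (q * t + κ))
      exact hψc.comp ((continuous_const.mul continuous_snd).add continuous_fst)
    exact this.add continuous_const
  have hgmono : StrictMono g := by
    intro κ₁ κ₂ hκ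
    have hsub : 0 < ∫ t in (0:ℝ)..h, (ψ (q * t + κ₂) - ψ (q * t + κ₁)) :=
      intervalIntegral.intervalIntegral_pos_of_pos
        (((hfc κ₂).sub (hfc κ₁)).intervalIntegrable _ _)
        (fun x => by
          have : q * x + κ₁ < q * x + κ₂ := by linarith
          have := hψmono this
          linarith) hh
    rw [intervalIntegral.integral_sub (((hfc κ₂)).intervalIntegrable _ _)
      (((hfc κ₁)).intervalIntegrable _ _)] at hsub
    simp only [hg]
    linarith
  have hginj : Function.Injective g := hgmono.injective
  -- find a root of g
  obtain ⟨κ, hκIcc, hκ⟩ : ∃ κ : ℝ, κ ∈ Set.Icc (φ (-s/h) - |q| * h) (φ (-s/h) + |q| * h) ∧ g κ = 0 := by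
    set a : ℝ := φ (-s / h)
    have hψa : ψ a = -s / h := hψl _
    have hbound : ∀ t ∈ Set.Icc (0:ℝ) h, -(|q| * h) ≤ q * t ∧ q * t ≤ |q| * h := by
      intro t ht
      constructor
      · nlinarith [neg_abs_le q, le_abs_self q, ht.1, ht.2, abs_nonneg q]
      · nlinarith [neg_abs_le q, le_abs_self q, ht.1, ht.2, abs_nonneg q]
    have hlo : g (a - |q| * h) ≤ 0 := by
      have hmon : ∀ t ∈ Set.Icc (0:ℝ) h, ψ (q * t + (a - |q| * h)) ≤ -s / h := by
        intro t ht
        have : q * t + (a - |q| * h) ≤ a := by linarith [(hbound t ht).2]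
        calc ψ (q * t + (a - |q| * h)) ≤ ψ a := hψmono.monotone this
          _ = -s / h := hψa
      have := intervalIntegral.integral_mono_on hh.le
        ((hfc (a - |q| * h)).intervalIntegrable _ _)
        (intervalIntegrable_const (μ := MeasureTheory.volume) (c := -s / h)) hmon
      rw [intervalIntegral.integral_const] at this
      simp only [hg]
      have : (∫ t in (0:ℝ)..h, ψ (q * t + (a - |q| * h))) ≤ (h - 0) • (-s / h) := this
      rw [smul_eq_mul] at this
      have hne : h ≠ 0 := hh.ne'
      have : (∫ t in (0:ℝ)..h, ψ (q * t + (a - |q| * h))) ≤ -s := by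
        rw [show (h - 0) * (-s / h) = -s by field_simp; ring] at this; exact this
      linarith
    have hhi : 0 ≤ g (a + |q| * h) := by
      have hmon : ∀ t ∈ Set.Icc (0:ℝ) h, -s / h ≤ ψ (q * t + (a + |q| * h)) := by
        intro t ht
        have : a ≤ q * t + (a + |q| * h) := by linarith [(hbound t ht).1]
        calc (-s / h) = ψ a := hψa.symm
          _ ≤ ψ (q * t + (a + |q| * h)) := hψmono.monotone this
      have := intervalIntegral.integral_mono_on hh.le
        (intervalIntegrable_const (μ := MeasureTheory.volume) (c := -s / h))
        ((hfc (a + |q| * h)).intervalIntegrable _ _) hmon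
      rw [intervalIntegral.integral_const] at this
      simp only [hg]
      rw [smul_eq_mul] at this
      have : -s ≤ ∫ t in (0:ℝ)..h, ψ (q * t + (a + |q| * h)) := by
        rw [show (h - 0) * (-s / h) = -s by field_simp; ring] at this; exact this
      linarith
    have hle : a - |q| * h ≤ a + |q| * h := by
      have : 0 ≤ |q| * h := by positivity
      linarith
    have := intermediate_value_Icc hle hgc.continuousOn
    have h0mem : (0:ℝ) ∈ Set.Icc (g (a - |q| * h)) (g (a + |q| * h)) := ⟨hlo, hhi⟩
    obtain ⟨κ, hκmem, hκ0⟩ := this h0mem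
    exact ⟨κ, hκmem, hκ0⟩
  clear hκIcc
  -- the candidate solution
  set u : ℝ → ℝ := fun z => s + ∫ t in (0:ℝ)..z, ψ (q * t + κ) with hu
  have hud : ∀ z : ℝ, HasDerivAt u (ψ (q * z + κ)) z := by
    intro z
    have := intervalIntegral.integral_hasDerivAt_right
      ((hfc κ).intervalIntegrable 0 z)
      ((hfc κ).stronglyMeasurableAtFilter _ _)
      (hfc κ).continuousAt
    exact this.const_add s
  have hudw : ∀ z ∈ Set.Icc (0:ℝ) h, derivWithin u (Set.Icc 0 h) z = ψ (q * z + κ) := by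
    intro z hz
    exact ((hud z).hasDerivWithinAt).derivWithin (uniqueDiffOn_Icc hh z hz)
  have hPu : P u κ := by
    rw [hP]
    refine ⟨fun z hz => ((hud z).differentiableAt).differentiableWithinAt, ?_, ?_, ?_, ?_⟩
    · exact (hfc κ).continuousOn.congr hudw
    · simp [hu]
    · have : g κ = 0 := hκ
      simp only [hg] at this
      simp only [hu]
      linarith
    · intro z hz
      rw [hudw z hz, hψr]
  -- key representation lemma for any solution
  have hrep : ∀ (u₀ : ℝ → ℝ) (κ₀ : ℝ), P u₀ κ₀ →
      ∀ z ∈ Set.Icc (0:ℝ) h, u₀ z = s + ∫ t in (0:ℝ)..z, ψ (q * t + κ₀) := by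
    intro u₀ κ₀ hPu₀ z hz
    rw [hP] at hPu₀
    obtain ⟨hdiff, hcont, hu0, huh, hode⟩ := hPu₀
    have hder : ∀ x ∈ Set.Icc (0:ℝ) h,
        derivWithin u₀ (Set.Icc 0 h) x = ψ (q * x + κ₀) := by
      intro x hx
      have := hode x hx
      rw [← this, hψl]
    have key : (∫ t in (0:ℝ)..z, ψ (q * t + κ₀)) = u₀ z - u₀ 0 := by
      apply intervalIntegral.integral_eq_sub_of_hasDeriv_right_of_le hz.1
      · exact (hdiff.continuousOn).mono (Set.Icc_subset_Icc le_rfl hz.2)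
      · intro x hx
        have hxh : x ∈ Set.Ioo (0:ℝ) h := ⟨hx.1, lt_of_lt_of_le hx.2 hz.2⟩
        have hmem : Set.Icc (0:ℝ) h ∈ nhds x := Icc_mem_nhds hxh.1 hxh.2
        have hda : HasDerivAt u₀ (derivWithin u₀ (Set.Icc 0 h) x) x :=
          ((hdiff x ⟨hxh.1.le, hxh.2.le⟩).hasDerivWithinAt).hasDerivAt hmem
        rw [hder x ⟨hxh.1.le, hxh.2.le⟩] at hda
        exact hda.hasDerivWithinAt
      · exact (hfc κ₀).intervalIntegrable _ _
    rw [key, hu0]; ring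
  -- any solution's κ is a root of g
  have hroot : ∀ (u₀ : ℝ → ℝ) (κ₀ : ℝ), P u₀ κ₀ → g κ₀ = 0 := by
    intro u₀ κ₀ hPu₀
    have := hrep u₀ κ₀ hPu₀ h ⟨hh.le, le_rfl⟩
    have huh : u₀ h = 0 := ((hP u₀ κ₀).mp hPu₀).2.2.2.1
    simp only [hg]
    rw [huh] at this
    linarith
  refine ⟨⟨u, κ, hPu⟩, ?_, ?_⟩
  · intro u₁ κ₁ u₂ κ₂ hP1 hP2
    have hκeq : κ₁ = κ₂ := hginj (by rw [hroot u₁ κ₁ hP1, hroot u₂ κ₂ hP2])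
    refine ⟨hκeq, fun z hz => ?_⟩
    rw [hrep u₁ κ₁ hP1 z hz, hrep u₂ κ₂ hP2 z hz, hκeq]
  · intro u₀ κ₀ hPu₀
    have hr0' : g κ₀ = 0 := hroot u₀ κ₀ hPu₀
    refine ⟨hrep u₀ κ₀ hPu₀, by simpa [hg] using hr0', ?_⟩
    intro κ' hκ'
    exact hginj (by rw [hr0']; simpa [hg] using hκ')
end
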